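/- Let ρ be a density matrix indexed by (Fin 2 × Fin 2) (a two-qubit state) such that Tr((Tr_A ρ)²) = 1, i.e., the reduced state of the second qubit is pure. Then ρ is singular: det ρ = 0 (equivalently, ρ is not positive definite). -/

import Mathlib

open ComplexOrder

/-- A density matrix: Hermitian, positive semidefinite, trace one. -/
def IsDensityMatrix {n : Type*} [Fintype n] [DecidableEq n] (ρ : Matrix n n ℂ) : Prop :=
  ρ.IsHermitian ∧ ρ.PosSemidef ∧ ρ.trace = 1

/-- Partial trace over the first factor. -/
noncomputable def ptraceA {nA nB : ℕ} (M : Matrix (Fin nA × Fin nB) (Fin nA × Fin nB) ℂ) :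
    Matrix (Fin nB) (Fin nB) ℂ :=
  Matrix.of fun j j' => ∑ i, M (i, j) (i, j')

/-- If the reduced state of the second qubit of a two-qubit state ρ is pure,
then ρ is singular (equivalently, ρ is not positive definite). -/
theorem singular_of_reduced_pure (ρ : Matrix (Fin 2 × Fin 2) (Fin 2 × Fin 2) ℂ)
    (hρ : IsDensityMatrix ρ)
    (hpure : (ptraceA ρ * ptraceA ρ).trace = 1) :
    ρ.det = 0 ∧ ¬ ρ.PosDef := by
  obtain ⟨hherm, hpsd, htr⟩ := hρ
  set σ := ptraceA ρ with hσ
  -- trace of σ is 1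
  have htrσ : σ.trace = 1 := by
    rw [← htr]
    simp [hσ, ptraceA, Matrix.trace, Matrix.diag, Fintype.sum_prod_type, Finset.sum_comm]
    ring
  -- det σ = 0 from the 2×2 identity 2 det = (tr σ)² - tr σ²
  have hdetσ : σ.det = 0 := by
    have h1 : σ.trace * σ.trace - (σ * σ).trace = 2 * σ.det := by
      simp [Matrix.trace, Matrix.det_fin_two, Fin.sum_univ_two, Matrix.mul_apply]
      ring
    rw [htrσ, hpure] at h1
    have : (2 : ℂ) * σ.det = 0 := by linear_combination -h1
    simpa using this
  -- get a kernel vector of σ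
  obtain ⟨v, hv0, hσv⟩ := Matrix.exists_mulVec_eq_zero_iff.mpr hdetσ
  -- lift to vectors on the full space
  set w : Fin 2 → (Fin 2 × Fin 2) → ℂ := fun i p => if p.1 = i then v p.2 else 0 with hw
  have hsum : ∑ i, dotProduct (star (w i)) (ρ.mulVec (w i))
      = dotProduct (star v) (σ.mulVec v) := by
    simp [hw, hσ, dotProduct, Matrix.mulVec, ptraceA, Fintype.sum_prod_type,
      Fin.sum_univ_two, Finset.mul_sum, Finset.sum_mul]
    ring
  have hzero : ∑ i, dotProduct (star (w i)) (ρ.mulVec (w i)) = 0 := by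
    rw [hsum, hσv]
    simp
  have hterm : ∀ i ∈ Finset.univ, dotProduct (star (w i)) (ρ.mulVec (w i)) = 0 :=
    (Finset.sum_eq_zero_iff_of_nonneg (fun i _ => hpsd.dotProduct_mulVec_nonneg (w i))).mp hzero
  have hker : ρ.mulVec (w 0) = 0 :=
    (hpsd.dotProduct_mulVec_zero_iff (w 0)).mp (hterm 0 (Finset.mem_univ 0))
  have hw0 : w 0 ≠ 0 := by
    intro h
    apply hv0
    funext b
    have := congrFun h (0, b)
    simpa [hw] using this
  have hdet : ρ.det = 0 := Matrix.exists_mulVec_eq_zero_iff.mp ⟨w 0, hw0, hker⟩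
  refine ⟨hdet, fun hpd => ?_⟩
  have := hpd.dotProduct_mulVec_pos hw0
  rw [hker] at this
  simp at this
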